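/- Let ρ be a density matrix on a bipartite system H_AB ⊗ H_C. If the reduced state ρ_AB = Tr_C(ρ) satisfies F·ρ_AB = ρ_AB, where F is the flip (swap) operator on H_A ⊗ H_B with H_A ≅ H_B, then (F ⊗ 1_C)·ρ = ρ. The analogous statement holds with F·ρ_AB = −ρ_AB. -/

import Mathlib

open Matrix
open scoped Kronecker ComplexOrder

/-- Partial trace over the third system `C` of a state on `(ℂ^d ⊗ ℂ^d) ⊗ ℂ^m`. -/
noncomputable def ptraceC (d m : ℕ)
    (ρ : Matrix ((Fin d × Fin d) × Fin m) ((Fin d × Fin d) × Fin m) ℂ) :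
    Matrix (Fin d × Fin d) (Fin d × Fin d) ℂ :=
  fun x y => ∑ c, ρ (x, c) (y, c)

/-- The flip (swap) operator on `ℂ^d ⊗ ℂ^d`, `F(|i⟩⊗|j⟩) = |j⟩⊗|i⟩`. -/
noncomputable def flipOp (d : ℕ) : Matrix (Fin d × Fin d) (Fin d × Fin d) ℂ :=
  fun x y => if x.1 = y.2 ∧ x.2 = y.1 then 1 else 0

open scoped MatrixOrder in
noncomputable def Matrix.PosSemidef.sqrt {n : Type*} [Fintype n] [DecidableEq n]
    {A : Matrix n n ℂ} (_ : A.PosSemidef) : Matrix n n ℂ := CFC.sqrt A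

open scoped MatrixOrder in
lemma Matrix.PosSemidef.posSemidef_sqrt {n : Type*} [Fintype n] [DecidableEq n]
    {A : Matrix n n ℂ} (hA : A.PosSemidef) : hA.sqrt.PosSemidef :=
  (CFC.sqrt_nonneg A).posSemidef

open scoped MatrixOrder in
lemma Matrix.PosSemidef.sqrt_mul_self {n : Type*} [Fintype n] [DecidableEq n]
    {A : Matrix n n ℂ} (hA : A.PosSemidef) : hA.sqrt * hA.sqrt = A :=
  CFC.sqrt_mul_sqrt_self A hA.nonneg

lemma Matrix.posSemidef_iff_eq_transpose_mul_self {n : Type*} [Fintype n] [DecidableEq n]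
    {A : Matrix n n ℂ} : A.PosSemidef ↔ ∃ B : Matrix n n ℂ, A = Bᴴ * B := by
  constructor
  · intro hA
    refine ⟨hA.sqrt, ?_⟩
    rw [hA.posSemidef_sqrt.isHermitian.eq, hA.sqrt_mul_self]
  · rintro ⟨B, rfl⟩
    exact posSemidef_conjTranspose_mul_self B

lemma psd_trace_zero {n : Type*} [Fintype n] [DecidableEq n]
    {A : Matrix n n ℂ} (hA : A.PosSemidef) (h : A.trace = 0) : A = 0 := by
  obtain ⟨B, rfl⟩ := posSemidef_iff_eq_transpose_mul_self.mp hA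
  suffices hB : B = 0 by simp [hB]
  ext i j
  have key : ∑ j, ∑ i, Complex.normSq (B i j) = 0 := by
    have := h
    simp only [Matrix.trace, Matrix.diag, Matrix.mul_apply, Matrix.conjTranspose_apply] at this
    have : (∑ j, ∑ i, (Complex.normSq (B i j) : ℂ)) = 0 := by
      rw [← this]; congr 1; ext j; congr 1; ext i
      rw [Complex.normSq_eq_conj_mul_self]; rfl
    exact_mod_cast this
  have hnn : ∀ j ∈ Finset.univ, (0:ℝ) ≤ ∑ i, Complex.normSq (B i j) :=
    fun j _ => Finset.sum_nonneg fun i _ => Complex.normSq_nonneg _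
  have h1 := (Finset.sum_eq_zero_iff_of_nonneg hnn).mp key j (Finset.mem_univ _)
  have h2 := (Finset.sum_eq_zero_iff_of_nonneg
    (fun i _ => Complex.normSq_nonneg (B i j))).mp h1 i (Finset.mem_univ _)
  simpa using Complex.normSq_eq_zero.mp h2

lemma flipOp_herm (d : ℕ) : (flipOp d)ᴴ = flipOp d := by
  ext x y
  simp only [flipOp, conjTranspose_apply]
  by_cases h : x.1 = y.2 ∧ x.2 = y.1
  · simp [h, h.1, h.2]
  · have h' : ¬(y.1 = x.2 ∧ y.2 = x.1) := fun hh => h ⟨hh.2.symm, hh.1.symm⟩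
    simp [h, h']

lemma trace_kron_one_mul (d m : ℕ) (S : Matrix (Fin d × Fin d) (Fin d × Fin d) ℂ)
    (ρ : Matrix ((Fin d × Fin d) × Fin m) ((Fin d × Fin d) × Fin m) ℂ) :
    ((S ⊗ₖ (1 : Matrix (Fin m) (Fin m) ℂ)) * ρ).trace = (S * ptraceC d m ρ).trace := by
  have hentry : ∀ (x : Fin d × Fin d) (c : Fin m),
      ((S ⊗ₖ (1 : Matrix (Fin m) (Fin m) ℂ)) * ρ) (x, c) (x, c)
        = ∑ y, S x y * ρ (y, c) (x, c) := by
    intro x c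
    rw [Matrix.mul_apply, Fintype.sum_prod_type]
    refine Finset.sum_congr rfl fun y _ => ?_
    simp [kroneckerMap_apply, Matrix.one_apply, mul_ite, mul_zero, mul_one, ite_mul, zero_mul,
      Finset.sum_ite_eq, Finset.sum_ite_eq']
  calc ((S ⊗ₖ (1 : Matrix (Fin m) (Fin m) ℂ)) * ρ).trace
      = ∑ x : Fin d × Fin d, ∑ c : Fin m, ∑ y, S x y * ρ (y, c) (x, c) := by
        rw [Matrix.trace, Fintype.sum_prod_type]
        exact Finset.sum_congr rfl fun x _ => Finset.sum_congr rfl fun c _ => hentry x c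
    _ = ∑ x : Fin d × Fin d, ∑ y, S x y * ∑ c, ρ (y, c) (x, c) := by
        refine Finset.sum_congr rfl fun x _ => ?_
        rw [Finset.sum_comm]
        exact Finset.sum_congr rfl fun y _ => (Finset.mul_sum _ _ _).symm
    _ = (S * ptraceC d m ρ).trace := by
        simp [Matrix.trace, Matrix.diag, Matrix.mul_apply, ptraceC]

/-- If the reduced state `ρ_AB = Tr_C(ρ)` of a density matrix `ρ` on `H_AB ⊗ H_C`
satisfies `F ρ_AB = ± ρ_AB`, then `(F ⊗ 1_C) ρ = ± ρ` (same sign). -/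
theorem flip_symmetry_extends_from_marginal (d m : ℕ)
    (ρ : Matrix ((Fin d × Fin d) × Fin m) ((Fin d × Fin d) × Fin m) ℂ)
    (hρ : ρ.PosSemidef) (htr : ρ.trace = 1)
    (ε : ℂ) (hε : ε = 1 ∨ ε = -1)
    (hmarg : flipOp d * ptraceC d m ρ = ε • ptraceC d m ρ) :
    (flipOp d ⊗ₖ (1 : Matrix (Fin m) (Fin m) ℂ)) * ρ = ε • ρ := by
  have hε2 : ε * ε = 1 := by rcases hε with h | h <;> simp [h]
  have hεc : star ε = ε := by rcases hε with h | h <;> simp [h]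
  set F := flipOp d with hF
  set σ := ptraceC d m ρ with hσ
  set M : Matrix (Fin d × Fin d) (Fin d × Fin d) ℂ := ε • 1 - F with hM
  have hMσ : M * σ = 0 := by
    rw [hM, sub_mul, hmarg, smul_mul_assoc, one_mul, sub_self]
  have hMH : Mᴴ = M := by
    rw [hM, conjTranspose_sub, conjTranspose_smul, conjTranspose_one, hεc, flipOp_herm]
  set N : Matrix ((Fin d × Fin d) × Fin m) ((Fin d × Fin d) × Fin m) ℂ :=
    M ⊗ₖ (1 : Matrix (Fin m) (Fin m) ℂ) with hN
  have hNH : Nᴴ = N := by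
    ext ⟨x, c⟩ ⟨y, c'⟩
    have := congrFun (congrFun hMH x) y
    simp only [conjTranspose_apply] at this ⊢
    simp only [hN, kroneckerMap_apply, Matrix.one_apply, star_mul']
    by_cases hc : c = c'
    · subst hc; simp [this]
    · simp [hc, Ne.symm hc]
  have htr0 : (N * ρ * Nᴴ).trace = 0 := by
    rw [hNH, trace_mul_cycle, hN, ← mul_kronecker_mul, one_mul,
      trace_kron_one_mul, mul_assoc, ← hσ, hMσ, mul_zero, trace_zero]
  have h0 : N * ρ * Nᴴ = 0 :=
    psd_trace_zero (hρ.mul_mul_conjTranspose_same N) htr0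
  have hsq : N * hρ.sqrt = 0 := by
    refine self_mul_conjTranspose_eq_zero.mp ?_
    rw [conjTranspose_mul, hρ.posSemidef_sqrt.isHermitian.eq, mul_assoc, ← mul_assoc hρ.sqrt,
      hρ.sqrt_mul_self, ← mul_assoc, h0]
  have hNρ : N * ρ = 0 := by
    rw [← hρ.sqrt_mul_self, ← mul_assoc, hsq, zero_mul]
  have hsplit : N = ε • (1 : Matrix ((Fin d × Fin d) × Fin m) ((Fin d × Fin d) × Fin m) ℂ)
      - F ⊗ₖ (1 : Matrix (Fin m) (Fin m) ℂ) := by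
    ext ⟨x, c⟩ ⟨y, c'⟩
    simp only [hN, hM, kroneckerMap_apply, Matrix.sub_apply, Matrix.smul_apply,
      Matrix.one_apply, smul_eq_mul, sub_mul, Prod.mk.injEq]
    split <;> split <;> simp_all
  rw [hsplit, sub_mul, smul_mul_assoc, one_mul, sub_eq_zero] at hNρ
  exact hNρ.symm
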